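/- Let X be a quandle acting on itself. The maps D : C_{n-1}(X;X) → C_n(X;X) given by D(x₁;x₂,…,xₙ) = (-1)^{n-1}(x₁;x₁,x₂,…,xₙ) form a chain map (∂D = D∂), and P∘D is the identity, where P(x₁;x₂,…,xₙ) = (-1)ⁿ(x₂;x₃,…,xₙ). -/

import Mathlib

/-- The `i`-th face `∂¹ᵢ` of the chain complex of the `X`-set `X`. -/
def yFace1 {Y X : Type*} (star : Y → X → Y) (act : X → X → X)
    (q : Y × List X) (i : ℕ) : Y × List X :=
  match q.2[i]? with
  | some b => (star q.1 b, (q.2.take i).map (fun a => act a b) ++ q.2.drop (i + 1))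
  | none => q

/-- The boundary `∂ = Σᵢ (-1)ⁱ (∂⁰ᵢ - ∂¹ᵢ)` on `C_•(Y;X)`. -/
noncomputable def ybnd {Y X : Type*} (star : Y → X → Y) (act : X → X → X)
    (c : (Y × List X) →₀ ℤ) : (Y × List X) →₀ ℤ :=
  c.sum fun q z =>
    ∑ i ∈ Finset.range q.2.length,
      (Finsupp.single (q.1, q.2.eraseIdx i) ((-1) ^ (i + 1) * z)
        - Finsupp.single (yFace1 star act q i) ((-1) ^ (i + 1) * z))

/-- `D(x₁;x₂,…,xₙ) = (-1)^{n-1} (x₁;x₁,x₂,…,xₙ)`. -/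
noncomputable def Dmap {X : Type*} (c : (X × List X) →₀ ℤ) : (X × List X) →₀ ℤ :=
  c.sum fun q z => Finsupp.single (q.1, q.1 :: q.2) ((-1) ^ q.2.length * z)

/-- `P(x₁;x₂,…,xₙ) = (-1)ⁿ (x₂;x₃,…,xₙ)` (zero on 0-chains). -/
noncomputable def Pmap {X : Type*} (c : (X × List X) →₀ ℤ) : (X × List X) →₀ ℤ :=
  c.sum fun q z =>
    match q.2 with
    | [] => 0
    | b :: t => Finsupp.single (b, t) ((-1) ^ t.length * z)

section Aux

variable {Y X : Type*}

lemma Dmap_single (q : X × List X) (z : ℤ) :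
    Dmap (Finsupp.single q z) = Finsupp.single (q.1, q.1 :: q.2) ((-1) ^ q.2.length * z) := by
  unfold Dmap
  rw [Finsupp.sum_single_index]
  simp

lemma Dmap_add (c d : (X × List X) →₀ ℤ) : Dmap (c + d) = Dmap c + Dmap d := by
  unfold Dmap
  apply Finsupp.sum_add_index' <;> intros <;> simp [mul_add, Finsupp.single_add]

lemma Dmap_zero : Dmap (0 : (X × List X) →₀ ℤ) = 0 := by
  unfold Dmap; simp

lemma Pmap_single (q : X × List X) (z : ℤ) :
    Pmap (Finsupp.single q z) =
      match q.2 with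
      | [] => 0
      | b :: t => Finsupp.single (b, t) ((-1) ^ t.length * z) := by
  unfold Pmap
  rw [Finsupp.sum_single_index]
  rcases q with ⟨x, _ | ⟨b, t⟩⟩ <;> simp

lemma Pmap_add (c d : (X × List X) →₀ ℤ) : Pmap (c + d) = Pmap c + Pmap d := by
  unfold Pmap
  apply Finsupp.sum_add_index' <;> intro q <;>
    rcases q with ⟨x, _ | ⟨b, t⟩⟩ <;> intros <;> simp [mul_add, Finsupp.single_add]

lemma Pmap_zero : Pmap (0 : (X × List X) →₀ ℤ) = 0 := by
  unfold Pmap; simp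

lemma ybnd_single (star : Y → X → Y) (act : X → X → X) (q : Y × List X) (z : ℤ) :
    ybnd star act (Finsupp.single q z) =
      ∑ i ∈ Finset.range q.2.length,
        (Finsupp.single (q.1, q.2.eraseIdx i) ((-1) ^ (i + 1) * z)
          - Finsupp.single (yFace1 star act q i) ((-1) ^ (i + 1) * z)) := by
  unfold ybnd
  rw [Finsupp.sum_single_index]
  simp

lemma ybnd_add (star : Y → X → Y) (act : X → X → X) (c d : (Y × List X) →₀ ℤ) :
    ybnd star act (c + d) = ybnd star act c + ybnd star act d := by
  unfold ybnd
  apply Finsupp.sum_add_index' <;> intros <;>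
    simp [mul_add, Finsupp.single_add, Finset.sum_add_distrib] <;> abel

lemma ybnd_zero (star : Y → X → Y) (act : X → X → X) :
    ybnd star act (0 : (Y × List X) →₀ ℤ) = 0 := by
  unfold ybnd; simp

noncomputable def DmapHom : ((X × List X) →₀ ℤ) →+ ((X × List X) →₀ ℤ) where
  toFun := Dmap
  map_zero' := Dmap_zero
  map_add' := Dmap_add

lemma Dmap_sum {ι : Type*} (s : Finset ι) (f : ι → (X × List X) →₀ ℤ) :
    Dmap (∑ i ∈ s, f i) = ∑ i ∈ s, Dmap (f i) :=
  map_sum DmapHom f s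

lemma Dmap_sub (c d : (X × List X) →₀ ℤ) : Dmap (c - d) = Dmap c - Dmap d :=
  map_sub DmapHom c d

/-- The chain-map identity on a single generator. -/
lemma chain_single (act : X → X → X) (hidem : ∀ a : X, act a a = a)
    (x : X) (l : List X) (z : ℤ) :
    ybnd act act (Dmap (Finsupp.single (x, l) z))
      = Dmap (ybnd act act (Finsupp.single (x, l) z)) := by
  rw [Dmap_single, ybnd_single, ybnd_single, Dmap_sum]
  simp only [List.length_cons]
  rw [Finset.sum_range_succ']
  have hzero : (Finsupp.single (x, (x :: l).eraseIdx 0) ((-1) ^ (0 + 1) * ((-1) ^ l.length * z))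
      - Finsupp.single (yFace1 act act (x, x :: l) 0) ((-1) ^ (0 + 1) * ((-1) ^ l.length * z)) :
      (X × List X) →₀ ℤ) = 0 := by
    have : yFace1 act act (x, x :: l) 0 = (x, l) := by
      unfold yFace1; simp [hidem]
    rw [this]
    simp
  rw [hzero, add_zero]
  apply Finset.sum_congr rfl
  intro j hj
  rw [Finset.mem_range] at hj
  obtain ⟨b, hb⟩ : ∃ b, l[j]? = some b := ⟨l[j], List.getElem?_eq_getElem hj⟩
  have hface1 : yFace1 act act (x, x :: l) (j + 1)
      = (act x b, act x b :: ((l.take j).map (fun a => act a b) ++ l.drop (j + 1))) := by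
    unfold yFace1
    simp [hb]
  have hface2 : yFace1 act act (x, l) j
      = (act x b, (l.take j).map (fun a => act a b) ++ l.drop (j + 1)) := by
    unfold yFace1
    simp [hb]
  rw [Dmap_sub, Dmap_single, Dmap_single, hface1, hface2]
  simp only [List.eraseIdx_cons_succ]
  have hlen1 : (l.eraseIdx j).length = l.length - 1 := by
    rw [List.length_eraseIdx]; simp [hj]
  have hlen2 : ((l.take j).map (fun a => act a b) ++ l.drop (j + 1)).length = l.length - 1 := by
    simp [List.length_take, List.length_drop]
    omega
  rw [hlen1, hlen2]
  have hc : ((-1 : ℤ)) ^ (j + 1 + 1) * ((-1) ^ l.length * z)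
      = (-1) ^ (l.length - 1) * ((-1) ^ (j + 1) * z) := by
    have h1 : ((-1 : ℤ)) ^ l.length = (-1) ^ (l.length - 1) * (-1) := by
      rw [← pow_succ, Nat.sub_add_cancel (by omega)]
    rw [h1]; ring
  rw [hc]

lemma PD_single (x : X) (l : List X) (z : ℤ) :
    Pmap (Dmap (Finsupp.single (x, l) z)) = Finsupp.single (x, l) z := by
  rw [Dmap_single, Pmap_single]
  simp only
  rw [← mul_assoc, ← pow_add]
  simp [pow_mul]

end Aux

/-- For a quandle `X` acting on itself, `D` is a chain map and `P ∘ D` is the identity. -/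
theorem stmt_6 {X : Type*} (act : X → X → X)
    (hbij : ∀ b : X, Function.Bijective fun a => act a b)
    (hdist : ∀ a b c : X, act (act a b) c = act (act a c) (act b c))
    (hidem : ∀ a : X, act a a = a) :
    (∀ c : (X × List X) →₀ ℤ, ybnd act act (Dmap c) = Dmap (ybnd act act c)) ∧
    (∀ c : (X × List X) →₀ ℤ, Pmap (Dmap c) = c) := by
  constructor
  · intro c
    induction c using Finsupp.induction with
    | zero => simp [Dmap_zero, ybnd_zero]
    | single_add q z f _ _ ih =>
      obtain ⟨x, l⟩ := q
      rw [Dmap_add, ybnd_add, ybnd_add, Dmap_add, ih, chain_single act hidem]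
  · intro c
    induction c using Finsupp.induction with
    | zero => simp [Dmap_zero, Pmap_zero]
    | single_add q z f _ _ ih =>
      obtain ⟨x, l⟩ := q
      rw [Dmap_add, Pmap_add, ih, PD_single]
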